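/- Every tOR net is substitution-sound. -/

import Mathlib

structure Net where
  P : Finset ℕ
  T : Finset ℕ
  F : Finset (ℕ × ℕ)
  I : Finset ℕ
  O : Finset ℕ

namespace Net

def nodes (N : Net) : Finset ℕ := N.P ∪ N.T

def IsPetri (N : Net) : Prop :=
  Disjoint N.P N.T ∧ ∀ e ∈ N.F, (e.1 ∈ N.P ∧ e.2 ∈ N.T) ∨ (e.1 ∈ N.T ∧ e.2 ∈ N.P)

def edge (N : Net) (x y : ℕ) : Prop := (x, y) ∈ N.F

def pathReach (N : Net) : ℕ → ℕ → Prop := Relation.ReflTransGen N.edge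

def Connected (N : Net) : Prop :=
  (∀ x ∈ N.nodes, ∃ i ∈ N.I, N.pathReach i x) ∧
  (∀ x ∈ N.nodes, ∃ o ∈ N.O, N.pathReach x o)

/-- place workflow net -/
def IsPWF (N : Net) : Prop :=
  N.IsPetri ∧ N.I ⊆ N.P ∧ N.O ⊆ N.P ∧ N.I.Nonempty ∧ N.O.Nonempty ∧ N.Connected

/-- transition workflow net -/
def IsTWF (N : Net) : Prop :=
  N.IsPetri ∧ N.I ⊆ N.T ∧ N.O ⊆ N.T ∧ N.I.Nonempty ∧ N.O.Nonempty ∧ N.Connected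

def IsWF (N : Net) : Prop := N.IsPWF ∨ N.IsTWF

abbrev Marking := ℕ → ℕ

def pre (N : Net) (t : ℕ) : Marking := fun p => if (p, t) ∈ N.F then 1 else 0
def post (N : Net) (t : ℕ) : Marking := fun p => if (t, p) ∈ N.F then 1 else 0
def enabled (N : Net) (t : ℕ) (m : Marking) : Prop := t ∈ N.T ∧ N.pre t ≤ m
def fire (N : Net) (t : ℕ) (m : Marking) : Marking := fun p => m p - N.pre t p + N.post t p
def stepRel (N : Net) (m m' : Marking) : Prop := ∃ t, N.enabled t m ∧ m' = N.fire t m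
def reach (N : Net) : Marking → Marking → Prop := Relation.ReflTransGen N.stepRel

/-- the marking with `k` tokens on each element of `S` -/
def bag (k : ℕ) (S : Finset ℕ) : Marking := fun p => if p ∈ S then k else 0

def kSound (N : Net) (k : ℕ) : Prop :=
  ∀ m, N.reach (bag k N.I) m → N.reach m (bag k N.O)

def starSound (N : Net) : Prop := ∀ k, 1 ≤ k → N.kSound k

def subSound (N : Net) : Prop :=
  ∀ k k' : ℕ, k' ≤ k → ∀ m : Marking,
    N.reach (bag k N.I) (m + bag k' N.O) → N.reach m (bag (k - k') N.O)

/-- place completion of a tWF net -/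
def pc (N : Net) (pi po : ℕ) : Net where
  P := insert pi (insert po N.P)
  T := N.T
  F := (N.I.image fun t => (pi, t)) ∪ (N.O.image fun t => (t, po)) ∪ N.F
  I := {pi}
  O := {po}

/-- transition completion of a pWF net -/
def tc (N : Net) (t_i t_o : ℕ) : Net where
  P := N.P
  T := insert t_i (insert t_o N.T)
  F := (N.I.image fun p => (t_i, p)) ∪ (N.O.image fun p => (p, t_o)) ∪ N.F
  I := {t_i}
  O := {t_o}

/-- *-soundness of a tWF net: its place completion (for fresh names) is *-sound -/
def tStarSound (N : Net) : Prop :=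
  ∀ pi po : ℕ, pi ∉ N.nodes → po ∉ N.nodes → pi ≠ po → (N.pc pi po).starSound

/-- sub-soundness of a tWF net: its place completion (for fresh names) is sub-sound -/
def tSubSound (N : Net) : Prop :=
  ∀ pi po : ℕ, pi ∉ N.nodes → po ∉ N.nodes → pi ≠ po → (N.pc pi po).subSound

/-- preset of a node, as a finset -/
def inEdges (N : Net) (n : ℕ) : Finset ℕ := (N.F.filter fun e => e.2 = n).image Prod.fst
/-- postset of a node, as a finset -/
def outEdges (N : Net) (n : ℕ) : Finset ℕ := (N.F.filter fun e => e.1 = n).image Prod.snd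

/-- substitution of the node `n` of `N` by the net `M` (place or transition substitution,
depending on the type of `n`): each input node of `M` inherits the preset of `n`, each
output node of `M` inherits the postset of `n`. -/
def subst (N : Net) (n : ℕ) (M : Net) : Net where
  P := (N.P.erase n) ∪ M.P
  T := (N.T.erase n) ∪ M.T
  F := (N.F.filter fun e => e.1 ≠ n ∧ e.2 ≠ n) ∪ M.F
        ∪ (N.inEdges n ×ˢ M.I) ∪ (M.O ×ˢ N.outEdges n)
  I := if n ∈ N.I then (N.I.erase n) ∪ M.I else N.I
  O := if n ∈ N.O then (N.O.erase n) ∪ M.O else N.O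

def Acyclic (N : Net) : Prop := ∀ x, ¬ Relation.TransGen N.edge x x

/-- AND net condition (on top of being a WF net) -/
def IsAND (N : Net) : Prop :=
  N.Acyclic ∧ ∀ p ∈ N.P,
    ((p ∈ N.I ∧ (N.inEdges p).card = 0) ∨ (p ∉ N.I ∧ (N.inEdges p).card = 1)) ∧
    ((p ∈ N.O ∧ (N.outEdges p).card = 0) ∨ (p ∉ N.O ∧ (N.outEdges p).card = 1))

/-- OR net condition (on top of being a WF net) -/
def IsOR (N : Net) : Prop :=
  ∀ t ∈ N.T,
    ((t ∈ N.I ∧ (N.inEdges t).card = 0) ∨ (t ∉ N.I ∧ (N.inEdges t).card = 1)) ∧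
    ((t ∈ N.O ∧ (N.outEdges t).card = 0) ∨ (t ∉ N.O ∧ (N.outEdges t).card = 1))

end Net

namespace Net

lemma mem_inEdges {N : Net} {t q : ℕ} : q ∈ N.inEdges t ↔ (q, t) ∈ N.F := by
  constructor
  · intro h
    simp only [inEdges, Finset.mem_image, Finset.mem_filter] at h
    obtain ⟨e, ⟨he, h2⟩, h1⟩ := h
    have he2 : e = (q, t) := by obtain ⟨a, b⟩ := e; simp_all
    rwa [he2] at he
  · intro h
    simp only [inEdges, Finset.mem_image, Finset.mem_filter]
    exact ⟨(q, t), ⟨h, rfl⟩, rfl⟩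

lemma mem_outEdges {N : Net} {t q : ℕ} : q ∈ N.outEdges t ↔ (t, q) ∈ N.F := by
  constructor
  · intro h
    simp only [outEdges, Finset.mem_image, Finset.mem_filter] at h
    obtain ⟨e, ⟨he, h2⟩, h1⟩ := h
    have he2 : e = (t, q) := by obtain ⟨a, b⟩ := e; simp_all
    rwa [he2] at he
  · intro h
    simp only [outEdges, Finset.mem_image, Finset.mem_filter]
    exact ⟨(t, q), ⟨h, rfl⟩, rfl⟩

lemma pc_mem_F {N : Net} {pi po : ℕ} {e : ℕ × ℕ} :
    e ∈ (N.pc pi po).F ↔ (∃ t ∈ N.I, e = (pi, t)) ∨ (∃ t ∈ N.O, e = (t, po)) ∨ e ∈ N.F := by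
  simp only [pc, Finset.mem_union, Finset.mem_image]
  constructor
  · rintro ((⟨t, ht, rfl⟩ | ⟨t, ht, rfl⟩) | h)
    · exact Or.inl ⟨t, ht, rfl⟩
    · exact Or.inr (Or.inl ⟨t, ht, rfl⟩)
    · exact Or.inr (Or.inr h)
  · rintro (⟨t, ht, rfl⟩ | ⟨t, ht, rfl⟩ | h)
    · exact Or.inl (Or.inl ⟨t, ht, rfl⟩)
    · exact Or.inl (Or.inr ⟨t, ht, rfl⟩)
    · exact Or.inr h

lemma pc_mem_P {N : Net} {pi po q : ℕ} :
    q ∈ (N.pc pi po).P ↔ q = pi ∨ q = po ∨ q ∈ N.P := by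
  simp [pc]

lemma sum_bag (s : Finset ℕ) (a k : ℕ) :
    ∑ q ∈ s, bag k {a} q = if a ∈ s then k else 0 := by
  simp [bag, Finset.mem_singleton, Finset.sum_ite_eq']

section PC

variable {N : Net} {pi po : ℕ}

lemma pc_petri (hN : N.IsTWF) (hpi : pi ∉ N.nodes) (hpo : po ∉ N.nodes) :
    (N.pc pi po).IsPetri := by
  obtain ⟨⟨hdis, hbip⟩, hIT, hOT, -, -, -⟩ := hN
  simp only [nodes, Finset.mem_union, not_or] at hpi hpo
  constructor
  · rw [Finset.disjoint_left]
    intro x hx hxT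
    rcases pc_mem_P.mp hx with rfl | rfl | hx
    · exact hpi.2 hxT
    · exact hpo.2 hxT
    · exact Finset.disjoint_left.mp hdis hx hxT
  · intro e he
    rcases pc_mem_F.mp he with ⟨t, ht, rfl⟩ | ⟨t, ht, rfl⟩ | h
    · exact Or.inl ⟨pc_mem_P.mpr (Or.inl rfl), hIT ht⟩
    · exact Or.inr ⟨hOT ht, pc_mem_P.mpr (Or.inr (Or.inl rfl))⟩
    · rcases hbip e h with ⟨h1, h2⟩ | ⟨h1, h2⟩
      · exact Or.inl ⟨pc_mem_P.mpr (Or.inr (Or.inr h1)), h2⟩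
      · exact Or.inr ⟨h1, pc_mem_P.mpr (Or.inr (Or.inr h2))⟩

lemma pc_inUnique (hN : N.IsTWF) (hOR : N.IsOR) (hpi : pi ∉ N.nodes) (hpo : po ∉ N.nodes)
    {t : ℕ} (ht : t ∈ N.T) :
    ∃ p, p ∈ (N.pc pi po).P ∧ (p, t) ∈ (N.pc pi po).F ∧
      ∀ q, (q, t) ∈ (N.pc pi po).F → q = p := by
  obtain ⟨⟨hdis, hbip⟩, hIT, hOT, -, -, -⟩ := hN
  simp only [nodes, Finset.mem_union, not_or] at hpi hpo
  have htpo : t ≠ po := fun h => hpo.2 (h ▸ ht)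
  rcases (hOR t ht).1 with ⟨htI, hcard⟩ | ⟨htI, hcard⟩
  · refine ⟨pi, pc_mem_P.mpr (Or.inl rfl), pc_mem_F.mpr (Or.inl ⟨t, htI, rfl⟩), ?_⟩
    intro q hq
    rcases pc_mem_F.mp hq with ⟨s, hs, he⟩ | ⟨s, hs, he⟩ | h
    · injection he with h1 h2
    · injection he with h1 h2
      exact absurd h2 htpo
    · have : q ∈ N.inEdges t := mem_inEdges.mpr h
      rw [Finset.card_eq_zero.mp hcard] at this
      exact absurd this (Finset.notMem_empty q)
  · obtain ⟨p, hp⟩ := Finset.card_eq_one.mp hcard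
    have hpF : (p, t) ∈ N.F := mem_inEdges.mp (hp ▸ Finset.mem_singleton_self p)
    have hpP : p ∈ N.P := by
      rcases hbip _ hpF with ⟨h1, h2⟩ | ⟨h1, h2⟩
      · exact h1
      · exact absurd h2 (Finset.disjoint_left.mp hdis · ht)
    refine ⟨p, pc_mem_P.mpr (Or.inr (Or.inr hpP)),
      pc_mem_F.mpr (Or.inr (Or.inr hpF)), ?_⟩
    intro q hq
    rcases pc_mem_F.mp hq with ⟨s, hs, he⟩ | ⟨s, hs, he⟩ | h
    · injection he with h1 h2
      exact absurd (h2 ▸ hs) htI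
    · injection he with h1 h2
      exact absurd h2 htpo
    · have : q ∈ N.inEdges t := mem_inEdges.mpr h
      rw [hp] at this
      exact Finset.mem_singleton.mp this

lemma pc_outUnique (hN : N.IsTWF) (hOR : N.IsOR) (hpi : pi ∉ N.nodes) (hpo : po ∉ N.nodes)
    {t : ℕ} (ht : t ∈ N.T) :
    ∃ p, p ∈ (N.pc pi po).P ∧ (t, p) ∈ (N.pc pi po).F ∧
      ∀ q, (t, q) ∈ (N.pc pi po).F → q = p := by
  obtain ⟨⟨hdis, hbip⟩, hIT, hOT, -, -, -⟩ := hN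
  simp only [nodes, Finset.mem_union, not_or] at hpi hpo
  have htpi : t ≠ pi := fun h => hpi.2 (h ▸ ht)
  rcases (hOR t ht).2 with ⟨htO, hcard⟩ | ⟨htO, hcard⟩
  · refine ⟨po, pc_mem_P.mpr (Or.inr (Or.inl rfl)), pc_mem_F.mpr (Or.inr (Or.inl ⟨t, htO, rfl⟩)), ?_⟩
    intro q hq
    rcases pc_mem_F.mp hq with ⟨s, hs, he⟩ | ⟨s, hs, he⟩ | h
    · injection he with h1 h2
      exact absurd h1 htpi
    · injection he with h1 h2
    · have : q ∈ N.outEdges t := mem_outEdges.mpr h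
      rw [Finset.card_eq_zero.mp hcard] at this
      exact absurd this (Finset.notMem_empty q)
  · obtain ⟨p, hp⟩ := Finset.card_eq_one.mp hcard
    have hpF : (t, p) ∈ N.F := mem_outEdges.mp (hp ▸ Finset.mem_singleton_self p)
    have hpP : p ∈ N.P := by
      rcases hbip _ hpF with ⟨h1, h2⟩ | ⟨h1, h2⟩
      · exact absurd h1 (Finset.disjoint_left.mp hdis · ht)
      · exact h2
    refine ⟨p, pc_mem_P.mpr (Or.inr (Or.inr hpP)),
      pc_mem_F.mpr (Or.inr (Or.inr hpF)), ?_⟩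
    intro q hq
    rcases pc_mem_F.mp hq with ⟨s, hs, he⟩ | ⟨s, hs, he⟩ | h
    · injection he with h1 h2
      exact absurd h1 htpi
    · injection he with h1 h2
      exact absurd (h1 ▸ hs) htO
    · have : q ∈ N.outEdges t := mem_outEdges.mpr h
      rw [hp] at this
      exact Finset.mem_singleton.mp this

lemma pre_eq_of_unique {M : Net} {t p : ℕ} (hp : (p, t) ∈ M.F)
    (huniq : ∀ q, (q, t) ∈ M.F → q = p) : M.pre t = bag 1 {p} := by
  funext q
  simp only [pre, bag, Finset.mem_singleton]
  by_cases h : q = p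
  · subst h; simp [hp]
  · rw [if_neg fun hq => h (huniq q hq), if_neg h]

lemma post_eq_of_unique {M : Net} {t p : ℕ} (hp : (t, p) ∈ M.F)
    (huniq : ∀ q, (t, q) ∈ M.F → q = p) : M.post t = bag 1 {p} := by
  funext q
  simp only [post, bag, Finset.mem_singleton]
  by_cases h : q = p
  · subst h; simp [hp]
  · rw [if_neg fun hq => h (huniq q hq), if_neg h]

lemma fire_unit {M : Net} {t p y : ℕ} (hpre : M.pre t = bag 1 {p})
    (hpost : M.post t = bag 1 {y}) (m' : Marking) :
    M.fire t (m' + bag 1 {p}) = m' + bag 1 {y} := by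
  funext q
  simp only [fire, hpre, hpost, Pi.add_apply, bag, Finset.mem_singleton]
  split_ifs <;> omega

lemma pc_move (hN : N.IsTWF) (hOR : N.IsOR) (hpi : pi ∉ N.nodes) (hpo : po ∉ N.nodes)
    {x : ℕ} (hx : Relation.ReflTransGen (N.pc pi po).edge x po) :
    (∀ m' : Marking, x ∈ (N.pc pi po).P →
      (N.pc pi po).reach (m' + bag 1 {x}) (m' + bag 1 {po})) ∧
    (∀ (m' : Marking) (p : ℕ), (p, x) ∈ (N.pc pi po).F → x ∈ (N.pc pi po).T →
      (N.pc pi po).reach (m' + bag 1 {p}) (m' + bag 1 {po})) := by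
  have hpetri := pc_petri hN hpi hpo
  induction hx using Relation.ReflTransGen.head_induction_on with
  | refl =>
    constructor
    · intro m' _; exact Relation.ReflTransGen.refl
    · intro m' p hpF hpoT
      exact absurd hpoT
        (Finset.disjoint_left.mp hpetri.1 (pc_mem_P.mpr (Or.inr (Or.inl rfl))))
  | @head x y hxy hpath ih =>
    have hbip := hpetri.2 (x, y) hxy
    constructor
    · intro m' hxP
      have hyT : y ∈ (N.pc pi po).T := by
        rcases hbip with ⟨h1, h2⟩ | ⟨h1, h2⟩
        · exact h2
        · exact absurd h1 (Finset.disjoint_left.mp hpetri.1 hxP)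
      exact ih.2 m' x hxy hyT
    · intro m' p hpx hxT
      have hyP : y ∈ (N.pc pi po).P := by
        rcases hbip with ⟨h1, h2⟩ | ⟨h1, h2⟩
        · exact absurd hxT (Finset.disjoint_left.mp hpetri.1 h1)
        · exact h2
      obtain ⟨p0, hp0P, hp0F, hp0u⟩ := pc_inUnique hN hOR hpi hpo (t := x) hxT
      obtain ⟨q0, hq0P, hq0F, hq0u⟩ := pc_outUnique hN hOR hpi hpo (t := x) hxT
      have hpp0 : p = p0 := hp0u p hpx
      subst hpp0
      have hyq0 : y = q0 := hq0u y hxy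
      have hpre : (N.pc pi po).pre x = bag 1 {p} := pre_eq_of_unique hpx hp0u
      have hpost : (N.pc pi po).post x = bag 1 {y} := by
        rw [hyq0]; exact post_eq_of_unique hq0F hq0u
      have hstep : (N.pc pi po).stepRel (m' + bag 1 {p}) (m' + bag 1 {y}) := by
        refine ⟨x, ⟨hxT, ?_⟩, (fire_unit hpre hpost m').symm⟩
        rw [hpre]; exact le_add_self
      exact Relation.ReflTransGen.head hstep (ih.1 m' hyP)

lemma pc_place_path (hN : N.IsTWF) {p : ℕ} (hp : p ∈ (N.pc pi po).P) :
    Relation.ReflTransGen (N.pc pi po).edge p po := by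
  obtain ⟨hP, hIT, hOT, hI, hO, hconn⟩ := hN
  have lift : ∀ {a b : ℕ}, N.pathReach a b → Relation.ReflTransGen (N.pc pi po).edge a b := by
    intro a b h
    refine Relation.ReflTransGen.mono ?_ a b h
    intro u v huv
    exact pc_mem_F.mpr (Or.inr (Or.inr huv))
  have toPo : ∀ x ∈ N.nodes, Relation.ReflTransGen (N.pc pi po).edge x po := by
    intro x hx
    obtain ⟨o, hoO, hpath⟩ := hconn.2 x hx
    exact (lift hpath).tail (pc_mem_F.mpr (Or.inr (Or.inl ⟨o, hoO, rfl⟩)))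
  rcases pc_mem_P.mp hp with rfl | rfl | hpP
  · obtain ⟨t, ht⟩ := hI
    exact Relation.ReflTransGen.head (pc_mem_F.mpr (Or.inl ⟨t, ht, rfl⟩))
      (toPo t (Finset.mem_union_right _ (hIT ht)))
  · exact Relation.ReflTransGen.refl
  · exact toPo p (Finset.mem_union_left _ hpP)

lemma pc_step_inv (hN : N.IsTWF) (hOR : N.IsOR) (hpi : pi ∉ N.nodes) (hpo : po ∉ N.nodes)
    {m m' : Marking} (h : (N.pc pi po).stepRel m m')
    (h0 : ∀ q, q ∉ (N.pc pi po).P → m q = 0) :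
    (∀ q, q ∉ (N.pc pi po).P → m' q = 0) ∧
      ∑ q ∈ (N.pc pi po).P, m' q = ∑ q ∈ (N.pc pi po).P, m q := by
  obtain ⟨t, ⟨htT, hle⟩, rfl⟩ := h
  obtain ⟨p0, hp0P, hp0F, hp0u⟩ := pc_inUnique hN hOR hpi hpo (t := t) htT
  obtain ⟨q0, hq0P, hq0F, hq0u⟩ := pc_outUnique hN hOR hpi hpo (t := t) htT
  have hpre : (N.pc pi po).pre t = bag 1 {p0} := pre_eq_of_unique hp0F hp0u
  have hpost : (N.pc pi po).post t = bag 1 {q0} := post_eq_of_unique hq0F hq0u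
  have hm : 1 ≤ m p0 := by
    have := hle p0
    rw [hpre] at this
    simpa [bag] using this
  constructor
  · intro q hq
    have hq1 : q ≠ p0 := fun h => hq (h ▸ hp0P)
    have hq2 : q ≠ q0 := fun h => hq (h ▸ hq0P)
    simp [fire, hpre, hpost, bag, hq1, hq2, h0 q hq]
  · have key : ∀ q, (N.pc pi po).fire t m q + bag 1 {p0} q = m q + bag 1 {q0} q := by
      intro q
      simp only [fire, hpre, hpost, bag, Finset.mem_singleton]
      by_cases h1 : q = p0
      · subst h1; split_ifs <;> omega
      · split_ifs <;> omega
    have hsum : ∑ q ∈ (N.pc pi po).P, ((N.pc pi po).fire t m q + bag 1 {p0} q)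
        = ∑ q ∈ (N.pc pi po).P, (m q + bag 1 {q0} q) :=
      Finset.sum_congr rfl fun q _ => key q
    rw [Finset.sum_add_distrib, Finset.sum_add_distrib, sum_bag, sum_bag,
      if_pos hp0P, if_pos hq0P] at hsum
    omega

lemma pc_reach_inv (hN : N.IsTWF) (hOR : N.IsOR) (hpi : pi ∉ N.nodes) (hpo : po ∉ N.nodes)
    {m m' : Marking} (h : (N.pc pi po).reach m m')
    (h0 : ∀ q, q ∉ (N.pc pi po).P → m q = 0) :
    (∀ q, q ∉ (N.pc pi po).P → m' q = 0) ∧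
      ∑ q ∈ (N.pc pi po).P, m' q = ∑ q ∈ (N.pc pi po).P, m q := by
  induction h with
  | refl => exact ⟨h0, rfl⟩
  | tail hab hbc ih =>
    obtain ⟨ih1, ih2⟩ := ih
    obtain ⟨j1, j2⟩ := pc_step_inv hN hOR hpi hpo hbc ih1
    exact ⟨j1, j2.trans ih2⟩

lemma pc_route (hN : N.IsTWF) (hOR : N.IsOR) (hpi : pi ∉ N.nodes) (hpo : po ∉ N.nodes) :
    ∀ (d : ℕ) (m : Marking), (∀ q, q ∉ (N.pc pi po).P → m q = 0) →
      ∑ q ∈ (N.pc pi po).P.erase po, m q = d →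
      (N.pc pi po).reach m (bag (∑ q ∈ (N.pc pi po).P, m q) {po}) := by
  have hpoP : po ∈ (N.pc pi po).P := pc_mem_P.mpr (Or.inr (Or.inl rfl))
  intro d
  induction d using Nat.strong_induction_on with
  | _ d ih =>
    intro m h0 hd
    rcases Nat.eq_zero_or_pos d with rfl | hdpos
    · have hme : m = bag (∑ q ∈ (N.pc pi po).P, m q) {po} := by
        funext q
        by_cases hq : q = po
        · rw [hq]
          have h1 : ∑ r ∈ (N.pc pi po).P, m r = m po := by
            rw [← Finset.add_sum_erase _ m hpoP, hd, add_zero]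
          rw [h1]
          simp [bag]
        · simp only [bag, Finset.mem_singleton, if_neg hq]
          by_cases hqP : q ∈ (N.pc pi po).P
          · exact (Finset.sum_eq_zero_iff.mp hd) q (Finset.mem_erase.mpr ⟨hq, hqP⟩)
          · exact h0 q hqP
      exact hme ▸ Relation.ReflTransGen.refl
    · have hex : ∃ p ∈ (N.pc pi po).P.erase po, m p ≠ 0 := by
        by_contra hcon
        push_neg at hcon
        rw [Finset.sum_eq_zero hcon] at hd
        omega
      obtain ⟨p, hpmem, hmp⟩ := hex
      obtain ⟨hppo, hpP⟩ := Finset.mem_erase.mp hpmem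
      set m1 : Marking := fun q => m q - (if q = p then 1 else 0) with hm1
      have hds : m = m1 + bag 1 {p} := by
        funext q
        simp only [Pi.add_apply, hm1, bag, Finset.mem_singleton]
        by_cases h1 : q = p
        · subst h1; simp; omega
        · simp [h1]
      set m2 : Marking := m1 + bag 1 {po} with hm2
      have hmove : (N.pc pi po).reach m m2 := by
        rw [hds]
        exact (pc_move hN hOR hpi hpo (pc_place_path hN hpP)).1 m1 hpP
      have key : ∀ q, m2 q + bag 1 {p} q = m q + bag 1 {po} q := by
        intro q
        simp only [hm2, hm1, Pi.add_apply, bag, Finset.mem_singleton]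
        by_cases h1 : q = p
        · rw [h1]
          have hne' : ¬ (p = po) := hppo
          split_ifs <;> omega
        · split_ifs <;> omega
      have h0' : ∀ q, q ∉ (N.pc pi po).P → m2 q = 0 := by
        intro q hq
        have hq1 : q ≠ p := fun h => hq (h ▸ hpP)
        have hq2 : q ≠ po := fun h => hq (h ▸ hpoP)
        simp [hm2, hm1, bag, hq1, hq2, h0 q hq]
      have htot : ∑ q ∈ (N.pc pi po).P, m2 q = ∑ q ∈ (N.pc pi po).P, m q := by
        have hsum : ∑ q ∈ (N.pc pi po).P, (m2 q + bag 1 {p} q)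
            = ∑ q ∈ (N.pc pi po).P, (m q + bag 1 {po} q) :=
          Finset.sum_congr rfl fun q _ => key q
        rw [Finset.sum_add_distrib, Finset.sum_add_distrib, sum_bag, sum_bag,
          if_pos hpP, if_pos hpoP] at hsum
        omega
      have hd' : ∑ q ∈ (N.pc pi po).P.erase po, m2 q = d - 1 := by
        have hsum : ∑ q ∈ (N.pc pi po).P.erase po, (m2 q + bag 1 {p} q)
            = ∑ q ∈ (N.pc pi po).P.erase po, (m q + bag 1 {po} q) :=
          Finset.sum_congr rfl fun q _ => key q
        have hpo_not : po ∉ (N.pc pi po).P.erase po := Finset.notMem_erase _ _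
        rw [Finset.sum_add_distrib, Finset.sum_add_distrib, sum_bag, sum_bag,
          if_pos hpmem, if_neg hpo_not] at hsum
        omega
      have := ih (d - 1) (by omega) m2 h0' hd'
      rw [htot] at this
      exact Relation.ReflTransGen.trans hmove this

end PC

end Net

theorem stmt19 (N : Net) (hN : N.IsTWF) (hOR : N.IsOR) : N.tSubSound := by
  intro pi po hpi hpo hne
  intro k k' hk' m hreach
  have hpoP : po ∈ (N.pc pi po).P := Net.pc_mem_P.mpr (Or.inr (Or.inl rfl))
  have hpiP : pi ∈ (N.pc pi po).P := Net.pc_mem_P.mpr (Or.inl rfl)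
  have h0 : ∀ q, q ∉ (N.pc pi po).P → Net.bag k (N.pc pi po).I q = 0 := by
    intro q hq
    have hq1 : q ≠ pi := fun h => hq (h ▸ hpiP)
    simp [Net.pc, Net.bag, hq1]
  have hinv := Net.pc_reach_inv hN hOR hpi hpo hreach h0
  have hsum0 : ∑ q ∈ (N.pc pi po).P, Net.bag k (N.pc pi po).I q = k := by
    show ∑ q ∈ (N.pc pi po).P, Net.bag k {pi} q = k
    rw [Net.sum_bag, if_pos hpiP]
  have hm0 : ∀ q, q ∉ (N.pc pi po).P → m q = 0 := by
    intro q hq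
    have := hinv.1 q hq
    simp only [Pi.add_apply] at this
    omega
  have hsplit : ∑ q ∈ (N.pc pi po).P, (m + Net.bag k' (N.pc pi po).O) q
      = (∑ q ∈ (N.pc pi po).P, m q) + k' := by
    show ∑ q ∈ (N.pc pi po).P, (m q + Net.bag k' {po} q) = _
    rw [Finset.sum_add_distrib, Net.sum_bag, if_pos hpoP]
  have htotm : ∑ q ∈ (N.pc pi po).P, m q = k - k' := by
    have h2 := hinv.2
    rw [hsum0, hsplit] at h2
    omega
  have := Net.pc_route hN hOR hpi hpo (∑ q ∈ (N.pc pi po).P.erase po, m q) m hm0 rfl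
  rw [htotm] at this
  exact this
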